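/- Let N, M be positive integers with M | N such that gcd(M, N/N_M) = 1, where N_M = ∏_{p | M} p^{v_p(N)}. Let α be a Dirichlet character modulo M and let α_N be the character modulo N it induces. Then for every integer n ≥ 1 and every integer l ≥ 0, σ_{l, 1, conj(α_N)}(n) = ∑_{e | gcd(n, N/N_M)} μ(e) conj(α)(e) e^{l} · σ_{l, 1, conj(α)}(n/e), where σ_{l,1,χ}(n) = ∑_{d | n} χ(d) d^{l} and μ is the Möbius function. -/

import Mathlib

open Finset

lemma sum_moebius_divisors_eq (k : ℕ) :
    (∑ e ∈ k.divisors, (ArithmeticFunction.moebius e : ℤ)) = if k = 1 then 1 else 0 := by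
  have h2 : ((ArithmeticFunction.moebius * ArithmeticFunction.zeta : ArithmeticFunction ℤ)) k
      = (1 : ArithmeticFunction ℤ) k := by rw [ArithmeticFunction.moebius_mul_coe_zeta]
  rw [ArithmeticFunction.coe_mul_zeta_apply, ArithmeticFunction.one_apply] at h2
  exact h2

/-- coefficient form of Lemma 5.1: with `N_M` the `M`-part of `N`
(same prime support as `M`, `N_M ∣ N`, `gcd(N_M, N/N_M) = 1`, and `gcd(M, N/N_M) = 1`),
for the character `α_N` mod `N` induced by `α` mod `M`, every `n ≥ 1` and `l ≥ 0`
satisfy `σ_{l,1,conj(α_N)}(n) = ∑_{e ∣ gcd(n, N/N_M)} μ(e) conj(α)(e) e^l ·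
σ_{l,1,conj(α)}(n/e)`, where `σ_{l,1,χ}(n) = ∑_{d∣n} χ(d) d^l`. -/
theorem eisenstein_decomposition_coefficients
    (N M NM : ℕ) (hN : 0 < N) (hM : 0 < M) (hMdvd : M ∣ N)
    (hMNM : M ∣ NM) (hNMdvd : NM ∣ N)
    (hprimes : ∀ p : ℕ, p.Prime → (p ∣ NM ↔ p ∣ M))
    (hcop : Nat.Coprime NM (N / NM)) (hcop' : Nat.Coprime M (N / NM))
    (α : DirichletCharacter ℂ M) :
    ∀ n : ℕ, 1 ≤ n → ∀ l : ℕ,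
      (∑ d ∈ Nat.divisors n,
          (starRingEnd ℂ) ((DirichletCharacter.changeLevel hMdvd α) ((d : ℕ) : ZMod N))
            * (d : ℂ) ^ l)
        = ∑ e ∈ Nat.divisors (Nat.gcd n (N / NM)),
            ((ArithmeticFunction.moebius e : ℤ) : ℂ) *
              (starRingEnd ℂ) (α ((e : ℕ) : ZMod M)) * (e : ℂ) ^ l *
              (∑ d ∈ Nat.divisors (n / e),
                (starRingEnd ℂ) (α ((d : ℕ) : ZMod M)) * (d : ℂ) ^ l) := by
  intro n hn l
  have hn0 : n ≠ 0 := by omega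
  set Q := N / NM with hQdef
  have hNfac : NM * Q = N := Nat.mul_div_cancel' hNMdvd
  have hQdvd : Q ∣ N := ⟨NM, by rw [← hNfac, mul_comm]⟩
  -- pointwise key identity
  have key : ∀ d : ℕ,
      (starRingEnd ℂ) ((DirichletCharacter.changeLevel hMdvd α) ((d : ℕ) : ZMod N))
        = if Nat.gcd d Q = 1 then (starRingEnd ℂ) (α ((d : ℕ) : ZMod M)) else 0 := by
    intro d
    by_cases hdN : d.Coprime N
    · have hdQ : d.Coprime Q := Nat.Coprime.coprime_dvd_right hQdvd hdN
      rw [if_pos hdQ]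
      congr 1
      have := DirichletCharacter.changeLevel_eq_cast_of_dvd α hMdvd (ZMod.unitOfCoprime d hdN)
      simpa [ZMod.coe_unitOfCoprime, ZMod.cast_natCast hMdvd] using this
    · have h0 : (DirichletCharacter.changeLevel hMdvd α) ((d : ℕ) : ZMod N) = 0 :=
        MulChar.map_nonunit _ (by rwa [ZMod.isUnit_iff_coprime])
      rw [h0, map_zero]
      by_cases hdQ : Nat.gcd d Q = 1
      · rw [if_pos hdQ]
        have hdM : ¬ d.Coprime M := by
          intro hdM
          apply hdN
          have hdNM : d.Coprime NM := by
            by_contra h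
            obtain ⟨p, hp, hpd, hpNM⟩ := Nat.Prime.not_coprime_iff_dvd.mp h
            have h1 : p ∣ Nat.gcd d M := Nat.dvd_gcd hpd ((hprimes p hp).mp hpNM)
            rw [Nat.Coprime.gcd_eq_one hdM] at h1
            exact hp.ne_one (Nat.dvd_one.mp h1)
          rw [← hNfac]
          exact hdNM.mul_right hdQ
        have hz : α ((d : ℕ) : ZMod M) = 0 :=
          MulChar.map_nonunit _ (by rwa [ZMod.isUnit_iff_coprime])
        simp [hz]
      · rw [if_neg hdQ]
  -- rewrite LHS termwise
  have lhs1 : (∑ d ∈ Nat.divisors n,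
      (starRingEnd ℂ) ((DirichletCharacter.changeLevel hMdvd α) ((d : ℕ) : ZMod N))
        * (d : ℂ) ^ l)
      = ∑ m ∈ Nat.divisors n, ∑ e ∈ Nat.divisors (Nat.gcd m Q),
          ((ArithmeticFunction.moebius e : ℤ) : ℂ) *
            ((starRingEnd ℂ) (α ((m : ℕ) : ZMod M)) * (m : ℂ) ^ l) := by
    refine Finset.sum_congr rfl fun m hm => ?_
    rw [key m, ← Finset.sum_mul]
    have hmu : (∑ e ∈ Nat.divisors (Nat.gcd m Q), ((ArithmeticFunction.moebius e : ℤ) : ℂ))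
        = if Nat.gcd m Q = 1 then 1 else 0 := by
      rw [← Int.cast_sum, sum_moebius_divisors_eq]
      split <;> simp
    rw [hmu]
    split <;> ring
  rw [lhs1]
  -- rewrite RHS termwise
  have rhs1 : ∀ e ∈ Nat.divisors (Nat.gcd n Q),
      ((ArithmeticFunction.moebius e : ℤ) : ℂ) *
        (starRingEnd ℂ) (α ((e : ℕ) : ZMod M)) * (e : ℂ) ^ l *
        (∑ d ∈ Nat.divisors (n / e),
          (starRingEnd ℂ) (α ((d : ℕ) : ZMod M)) * (d : ℂ) ^ l)
      = ∑ d ∈ Nat.divisors (n / e),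
          ((ArithmeticFunction.moebius e : ℤ) : ℂ) *
            ((starRingEnd ℂ) (α (((e * d : ℕ)) : ZMod M)) * ((e * d : ℕ) : ℂ) ^ l) := by
    intro e he
    rw [Finset.mul_sum]
    refine Finset.sum_congr rfl fun d hd => ?_
    push_cast
    rw [map_mul α, map_mul (starRingEnd ℂ)]
    ring
  rw [Finset.sum_congr rfl rhs1]
  -- now both sides are double sums; use sigma and a bijection
  rw [Finset.sum_sigma', Finset.sum_sigma']
  refine Finset.sum_nbij' (fun p => ⟨p.2, p.1 / p.2⟩) (fun p => ⟨p.1 * p.2, p.1⟩)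
    ?_ ?_ ?_ ?_ ?_
  · rintro ⟨m, e⟩ hme
    simp only [Finset.mem_sigma, Nat.mem_divisors] at hme ⊢
    obtain ⟨⟨hmn, -⟩, hegcd, hgcd0⟩ := hme
    have hem : e ∣ m := (Nat.dvd_gcd_iff.mp hegcd).1
    have heQ : e ∣ Q := (Nat.dvd_gcd_iff.mp hegcd).2
    have hen : e ∣ n := hem.trans hmn
    have he0 : 0 < e := Nat.pos_of_ne_zero (by rintro rfl; exact hgcd0 (Nat.eq_zero_of_zero_dvd hegcd))
    obtain ⟨a, ha⟩ := hem
    obtain ⟨b, hb⟩ := hmn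
    refine ⟨⟨Nat.dvd_gcd hen heQ, fun h => hn0 (Nat.eq_zero_of_gcd_eq_zero_left h)⟩, ?_, ?_⟩
    · rw [ha, hb, ha, Nat.mul_div_cancel_left a he0, Nat.mul_assoc, Nat.mul_div_cancel_left _ he0]
      exact Dvd.intro b rfl
    · intro h
      have : 0 < n / e := Nat.div_pos (Nat.le_of_dvd (Nat.pos_of_ne_zero hn0) hen) he0
      omega
  · rintro ⟨e, d⟩ hed
    simp only [Finset.mem_sigma, Nat.mem_divisors] at hed ⊢
    obtain ⟨⟨hegcd, -⟩, hdne, hne0⟩ := hed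
    have hen : e ∣ n := (Nat.dvd_gcd_iff.mp hegcd).1
    have heQ : e ∣ Q := (Nat.dvd_gcd_iff.mp hegcd).2
    have he0 : 0 < e := Nat.pos_of_dvd_of_pos hen (Nat.pos_of_ne_zero hn0)
    have hd0 : 0 < d := Nat.pos_of_dvd_of_pos hdne (Nat.pos_of_ne_zero hne0)
    have hedn : e * d ∣ n := by
      have := Nat.mul_dvd_mul_left e hdne
      rwa [Nat.mul_div_cancel' hen] at this
    refine ⟨⟨hedn, hn0⟩, Nat.dvd_gcd (Dvd.intro d rfl) heQ, fun h => ?_⟩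
    have := Nat.eq_zero_of_gcd_eq_zero_left h
    exact absurd this (Nat.mul_ne_zero he0.ne' hd0.ne')
  · rintro ⟨m, e⟩ hme
    simp only [Finset.mem_sigma, Nat.mem_divisors] at hme
    have hem : e ∣ m := (Nat.dvd_gcd_iff.mp hme.2.1).1
    simp [Nat.mul_div_cancel' hem]
  · rintro ⟨e, d⟩ hed
    simp only [Finset.mem_sigma, Nat.mem_divisors] at hed
    have hen : e ∣ n := (Nat.dvd_gcd_iff.mp hed.1.1).1
    have he0 : 0 < e := Nat.pos_of_dvd_of_pos hen (Nat.pos_of_ne_zero hn0)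
    simp [Nat.mul_div_cancel_left d he0]
  · rintro ⟨m, e⟩ hme
    simp only [Finset.mem_sigma, Nat.mem_divisors] at hme
    have hem : e ∣ m := (Nat.dvd_gcd_iff.mp hme.2.1).1
    simp [Nat.mul_div_cancel' hem]
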